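/- For all ordinals α, β < ε_{Ω+1}, one has ϑ(α) < ϑ(β) if and only if either (α < β and k(α) < ϑ(β)) or (β < α and ϑ(α) ≤ k(β)). -/

import Mathlib

/-- `Ω`, the first uncountable ordinal `ω₁`. -/
noncomputable def Omega1 : Ordinal.{0} := (Cardinal.aleph 1).ord

/-- `KMem β α` expresses `β ∈ K(α)`, where `K(0) = {0}` and, for
`α = Ω^{α₁}·β₁ + … + Ω^{αₙ}·βₙ` in base-`Ω` Cantor normal form,
`K(α) = {β₁,…,βₙ} ∪ K(α₁) ∪ … ∪ K(αₙ)`. -/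
inductive KMem : Ordinal.{0} → Ordinal.{0} → Prop
  | zero : KMem 0 0
  | coeff {α e c : Ordinal.{0}} : (e, c) ∈ Ordinal.CNF Omega1 α → KMem c α
  | expo {α e c β : Ordinal.{0}} : (e, c) ∈ Ordinal.CNF Omega1 α → KMem β e → KMem β α

/-- `k(α) = max K(α)` (as a supremum; `K(α)` is finite for `α < ε_{Ω+1}`). -/
noncomputable def kMax (α : Ordinal.{0}) : Ordinal.{0} := sSup {β | KMem β α}

/-- Membership in `P`, the class of additively closed ordinals `{ω^ξ : ξ ∈ On}`. -/
def AddClosed (ζ : Ordinal.{0}) : Prop := ∃ ξ : Ordinal.{0}, ζ = Ordinal.omega0 ^ ξ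

/-- The collapsing function `ϑ`: `ϑ(α)` is the least `ζ ∈ P` such that `k(α) < ζ` and
for all `β < α` with `k(β) < ζ` one has `ϑ(β) < ζ`. -/
noncomputable def theta : Ordinal.{0} → Ordinal.{0} :=
  Ordinal.lt_wf.fix (C := fun _ => Ordinal.{0}) fun α IH =>
    sInf {ζ : Ordinal.{0} | AddClosed ζ ∧ kMax α < ζ ∧
      ∀ (β : Ordinal.{0}) (h : β < α), kMax β < ζ → IH β h < ζ}

/-- `ε_{Ω+1}`, the least epsilon number above `Ω`. -/
noncomputable def epsOmega1 : Ordinal.{0} :=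
  Ordinal.nfp (fun a => Ordinal.omega0 ^ a) (Omega1 + 1)

/-- The tower `Ω_n[1]`: `Ω_0[1] = 1` and `Ω_{n+1}[1] = Ω ^ Ω_n[1]`. -/
noncomputable def OmegaTower : ℕ → Ordinal.{0}
  | 0 => 1
  | nn + 1 => Omega1 ^ OmegaTower nn

/-- The Howard–Bachmann ordinal `ϑ(ε_{Ω+1}) = sup_{n<ω} ϑ(Ω_n[1])`. -/
noncomputable def HowardBachmann : Ordinal.{0} := ⨆ nn : ℕ, theta (OmegaTower nn)

section Aux

open Ordinal Cardinal Set

lemma one_lt_Omega1 : (1 : Ordinal) < Omega1 := by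
  rw [Omega1, Cardinal.lt_ord]
  simpa using (Cardinal.one_lt_aleph0.trans Cardinal.aleph0_lt_aleph_one)

lemma Omega1_pos : (0 : Ordinal) < Omega1 := zero_lt_one.trans one_lt_Omega1

lemma omega0_lt_Omega1 : (Ordinal.omega0 : Ordinal) < Omega1 := by
  rw [Omega1, Cardinal.lt_ord, Ordinal.card_omega0]
  exact Cardinal.aleph0_lt_aleph_one

lemma Omega1_isLimit : Order.IsSuccLimit Omega1 :=
  Cardinal.isSuccLimit_ord (Cardinal.aleph0_le_aleph 1)

lemma succ_lt_Omega1 {a : Ordinal} (h : a < Omega1) : a + 1 < Omega1 := by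
  rw [Ordinal.add_one_eq_succ]
  exact Omega1_isLimit.succ_lt h

lemma kmem_lt_Omega1 {β α : Ordinal} (h : KMem β α) : β < Omega1 := by
  induction h with
  | zero => exact Omega1_pos
  | coeff h => exact Ordinal.CNF.snd_lt one_lt_Omega1 h
  | expo _ _ ih => exact ih

lemma opow_le_of_mem_CNF {α : Ordinal} {p : Ordinal × Ordinal}
    (hp : p ∈ Ordinal.CNF Omega1 α) : Omega1 ^ p.1 ≤ α := by
  have hα : α ≠ 0 := by
    rintro rfl
    simp [Ordinal.CNF.zero_right] at hp
  calc Omega1 ^ p.1 ≤ Omega1 ^ Ordinal.log Omega1 α :=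
        Ordinal.opow_le_opow_right Omega1_pos (Ordinal.CNF.fst_le_log hp)
    _ ≤ α := Ordinal.opow_log_le_self _ hα

lemma lt_opow_self_of_lt_eps {e : Ordinal} (he : e < epsOmega1) : e < Omega1 ^ e := by
  by_contra hle
  push_neg at hle
  have h1 : (Ordinal.omega0 : Ordinal) ^ e ≤ Omega1 ^ e :=
    Ordinal.opow_le_opow_left e omega0_lt_Omega1.le
  have h2 : e ≤ Ordinal.omega0 ^ e := Ordinal.right_le_opow e Ordinal.one_lt_omega0
  have hfix : Ordinal.omega0 ^ e = e := le_antisymm (h1.trans hle) h2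
  have he1 : (1 : Ordinal) ≤ e := by
    by_contra h
    push_neg at h
    rw [Ordinal.lt_one_iff_zero] at h
    subst h
    simp at hle
  have hΩle : Omega1 ≤ e := by
    calc Omega1 = Omega1 ^ (1 : Ordinal) := (Ordinal.opow_one _).symm
      _ ≤ Omega1 ^ e := Ordinal.opow_le_opow_right Omega1_pos he1
      _ ≤ e := hle
  have hne : Omega1 ≠ e := by
    rintro rfl
    have : Omega1 ^ (1 : Ordinal) < Omega1 ^ Omega1 :=
      (Ordinal.opow_lt_opow_iff_right one_lt_Omega1).2 one_lt_Omega1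
    rw [Ordinal.opow_one] at this
    exact absurd hle (not_le.2 this)
  have hΩ1 : Omega1 + 1 ≤ e := by
    rw [Ordinal.add_one_eq_succ, Order.succ_le_iff]
    exact lt_of_le_of_ne hΩle hne
  have : epsOmega1 ≤ e :=
    Ordinal.nfp_le_fp (Ordinal.isNormal_opow Ordinal.one_lt_omega0).strictMono.monotone hΩ1 hfix.le
  exact absurd he (not_lt.2 this)

lemma CNF_fst_lt {α : Ordinal} (hα : α < epsOmega1) {p : Ordinal × Ordinal}
    (hp : p ∈ Ordinal.CNF Omega1 α) : p.1 < α := by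
  have h1 : p.1 < epsOmega1 :=
    lt_of_le_of_lt ((Ordinal.CNF.fst_le_log hp).trans (Ordinal.log_le_self _ _)) hα
  exact (lt_opow_self_of_lt_eps h1).trans_le (opow_le_of_mem_CNF hp)

/-- The set `K(α)`. -/
def Kset (α : Ordinal.{0}) : Set Ordinal.{0} := {β | KMem β α}

lemma Kset_zero : Kset 0 = {0} := by
  ext β
  constructor
  · intro h
    cases h with
    | zero => rfl
    | coeff h => simp [Ordinal.CNF.zero_right] at h
    | expo h _ => simp [Ordinal.CNF.zero_right] at h
  · intro h
    rw [Set.mem_singleton_iff] at h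
    subst h
    exact KMem.zero

lemma Kset_finite : ∀ α : Ordinal, α < epsOmega1 → (Kset α).Finite := by
  intro α
  induction α using Ordinal.induction with
  | h α IH =>
    intro hα
    rcases eq_or_ne α 0 with rfl | h0
    · rw [Kset_zero]; exact Set.finite_singleton 0
    · have hsub : Kset α ⊆ ⋃ p ∈ {p | p ∈ Ordinal.CNF Omega1 α}, ({p.2} ∪ Kset p.1) := by
        intro β hβ
        cases hβ with
        | zero => exact absurd rfl h0
        | coeff h => exact Set.mem_biUnion h (Or.inl rfl)
        | expo h hk => exact Set.mem_biUnion h (Or.inr hk)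
      refine Set.Finite.subset (Set.Finite.biUnion ((Ordinal.CNF Omega1 α).finite_toSet) ?_) hsub
      intro p hp
      exact (Set.finite_singleton _).union
        (IH p.1 (CNF_fst_lt hα hp) ((CNF_fst_lt hα hp).trans hα))

lemma Kset_nonempty (α : Ordinal) : (Kset α).Nonempty := by
  rcases eq_or_ne α 0 with rfl | h0
  · exact ⟨0, KMem.zero⟩
  · have hne : Ordinal.CNF Omega1 α ≠ [] := by
      intro h
      apply h0
      have hf := Ordinal.CNF.foldr Omega1 α
      rw [h] at hf
      exact hf.symm
    obtain ⟨p, hp⟩ := List.exists_mem_of_ne_nil _ hne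
    exact ⟨p.2, KMem.coeff (show (p.1, p.2) ∈ _ by simpa using hp)⟩

lemma kMax_mem {α : Ordinal} (hα : α < epsOmega1) : KMem (kMax α) α :=
  Set.Nonempty.csSup_mem (Kset_nonempty α) (Kset_finite α hα)

lemma kMax_lt_Omega1 {α : Ordinal} (hα : α < epsOmega1) : kMax α < Omega1 :=
  kmem_lt_Omega1 (kMax_mem hα)

lemma le_kMax {α β : Ordinal} (hα : α < epsOmega1) (h : KMem β α) : β ≤ kMax α :=
  le_csSup (Set.Finite.bddAbove (Kset_finite α hα)) h

lemma tower_succ (n : ℕ) : OmegaTower (n + 1) = Omega1 ^ OmegaTower n := rfl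

lemma tower_zero : OmegaTower 0 = 1 := rfl

lemma tower_lt_succ (n : ℕ) : OmegaTower n < OmegaTower (n + 1) := by
  induction n with
  | zero =>
    rw [tower_succ, tower_zero, Ordinal.opow_one]
    exact one_lt_Omega1
  | succ n ih =>
    rw [tower_succ, tower_succ]
    exact (Ordinal.opow_lt_opow_iff_right one_lt_Omega1).2 ih

lemma tower_strictMono : StrictMono OmegaTower := strictMono_nat_of_lt_succ tower_lt_succ

lemma le_towerSup (n : ℕ) : OmegaTower n ≤ ⨆ m, OmegaTower m :=
  Ordinal.le_iSup _ n

lemma towerSup_isLimit : Order.IsSuccLimit (⨆ m, OmegaTower m) := by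
  rw [Ordinal.isSuccLimit_iff, Order.isSuccPrelimit_iff_succ_lt]
  constructor
  · intro h
    have h1 := le_towerSup 0
    rw [tower_zero, h] at h1
    exact absurd h1 (by simp)
  · intro a ha
    obtain ⟨n, hn⟩ := Ordinal.lt_iSup_iff.1 ha
    calc Order.succ a ≤ OmegaTower n := Order.succ_le_of_lt hn
      _ < OmegaTower (n + 1) := tower_lt_succ n
      _ ≤ _ := le_towerSup (n + 1)

lemma eps_le_towerSup : epsOmega1 ≤ ⨆ m, OmegaTower m := by
  apply Ordinal.nfp_le_fp (Ordinal.isNormal_opow Ordinal.one_lt_omega0).strictMono.monotone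
  · have h1 : OmegaTower 1 = Omega1 := by rw [tower_succ, tower_zero, Ordinal.opow_one]
    have h2 : Omega1 < OmegaTower 2 := by
      rw [← h1]; exact tower_lt_succ 1
    rw [Ordinal.add_one_eq_succ, Order.succ_le_iff]
    exact h2.trans_le (le_towerSup 2)
  · rw [Ordinal.opow_le_of_isSuccLimit Ordinal.omega0_ne_zero towerSup_isLimit]
    intro x hx
    obtain ⟨n, hn⟩ := Ordinal.lt_iSup_iff.1 hx
    calc (Ordinal.omega0 : Ordinal) ^ x ≤ Ordinal.omega0 ^ OmegaTower n :=
          Ordinal.opow_le_opow_right Ordinal.omega0_pos hn.le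
      _ ≤ Omega1 ^ OmegaTower n := Ordinal.opow_le_opow_left _ omega0_lt_Omega1.le
      _ = OmegaTower (n + 1) := (tower_succ n).symm
      _ ≤ _ := le_towerSup (n + 1)

lemma exists_tower {γ : Ordinal} (h : γ < epsOmega1) : ∃ n, γ < OmegaTower n :=
  Ordinal.lt_iSup_iff.1 (h.trans_le eps_le_towerSup)

lemma countable_Iio {δ : Ordinal.{0}} (hδ : δ < Omega1) : (Set.Iio δ).Countable := by
  rw [Cardinal.countable_iff_lt_aleph_one, Ordinal.mk_Iio_ordinal]
  have h1 : δ.card < Cardinal.aleph 1 := Cardinal.lt_ord.1 hδ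
  have h2 := Cardinal.lift_lt.{0, 1}.2 h1
  calc Cardinal.lift.{1} δ.card < Cardinal.lift.{1} (Cardinal.aleph 1) := h2
    _ = Cardinal.aleph 1 := by rw [Cardinal.lift_aleph]; simp

lemma countable_lists {u : Set (Ordinal.{0} × Ordinal.{0})} (hu : u.Countable) :
    {l : List (Ordinal.{0} × Ordinal.{0}) | ∀ p ∈ l, p ∈ u}.Countable := by
  haveI := hu.to_subtype
  have hsub : {l : List (Ordinal.{0} × Ordinal.{0}) | ∀ p ∈ l, p ∈ u} ⊆
      Set.range (List.map (Subtype.val : u → Ordinal.{0} × Ordinal.{0})) := by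
    intro l hl
    exact ⟨l.attachWith _ hl, List.attachWith_map_subtype_val hl⟩
  exact (Set.countable_range _).mono hsub

/-- Ordinals all of whose `K`-elements are `< δ`. -/
def Klt (δ : Ordinal.{0}) : Set Ordinal.{0} := {γ | ∀ β, KMem β γ → β < δ}

lemma level_countable {δ : Ordinal} (hδ : δ < Omega1) (n : ℕ) :
    {γ | γ < OmegaTower n ∧ γ ∈ Klt δ}.Countable := by
  induction n with
  | zero =>
    apply Set.Countable.mono ?_ (Set.countable_singleton 0)
    rintro γ ⟨h1, -⟩
    rw [tower_zero, Ordinal.lt_one_iff_zero] at h1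
    exact h1
  | succ n ih =>
    have hmaps : Set.MapsTo (Ordinal.CNF Omega1)
        {γ | γ < OmegaTower (n + 1) ∧ γ ∈ Klt δ}
        {l | ∀ p ∈ l, p ∈ ({γ | γ < OmegaTower n ∧ γ ∈ Klt δ} ×ˢ Set.Iio δ)} := by
      rintro γ ⟨hγ, hK⟩ p hp
      have hp' : (p.1, p.2) ∈ Ordinal.CNF Omega1 γ := by simpa using hp
      refine ⟨⟨?_, ?_⟩, ?_⟩
      · have h1 : Omega1 ^ p.1 ≤ γ := opow_le_of_mem_CNF hp
        have h2 : Omega1 ^ p.1 < Omega1 ^ OmegaTower n := by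
          rw [← tower_succ]; exact lt_of_le_of_lt h1 hγ
        exact (Ordinal.opow_lt_opow_iff_right one_lt_Omega1).1 h2
      · intro β hβ
        exact hK β (KMem.expo hp' hβ)
      · exact hK p.2 (KMem.coeff hp')
    have hinj : Set.InjOn (Ordinal.CNF Omega1)
        {γ | γ < OmegaTower (n + 1) ∧ γ ∈ Klt δ} := by
      intro x _ y _ h
      have hx := Ordinal.CNF.foldr Omega1 x
      have hy := Ordinal.CNF.foldr Omega1 y
      rw [h, hy] at hx
      exact hx.symm
    exact hmaps.countable_of_injOn hinj (countable_lists (ih.prod (countable_Iio hδ)))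

lemma Klt_countable {δ : Ordinal} (hδ : δ < Omega1) :
    {γ | γ < epsOmega1 ∧ γ ∈ Klt δ}.Countable := by
  apply Set.Countable.mono ?_ (Set.countable_iUnion (level_countable hδ))
  rintro γ ⟨h1, h2⟩
  obtain ⟨n, hn⟩ := exists_tower h1
  exact Set.mem_iUnion.2 ⟨n, hn, h2⟩

lemma omega0_opow_lt_Omega1 : ∀ x : Ordinal, x < Omega1 → Ordinal.omega0 ^ x < Omega1 := by
  intro x
  induction x using Ordinal.induction with
  | h x IH =>
    intro hx
    rcases Ordinal.zero_or_succ_or_isSuccLimit x with rfl | ⟨a, rfl⟩ | hlim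
    · simpa using one_lt_Omega1
    · rw [Ordinal.opow_succ, Omega1, Cardinal.lt_ord, Ordinal.card_mul]
      refine Cardinal.mul_lt_of_lt (Cardinal.aleph0_le_aleph 1) ?_ ?_
      · rw [← Cardinal.lt_ord]
        exact IH a (Order.lt_succ a) ((Order.lt_succ a).trans hx)
      · rw [Ordinal.card_omega0]
        exact Cardinal.aleph0_lt_aleph_one
    · rw [Ordinal.opow_limit Ordinal.omega0_ne_zero hlim]
      apply Ordinal.lift_iSup_lt_of_lt_cof
      · rw [← Ordinal.lift_cof, Omega1, Cardinal.isRegular_aleph_one.cof_ord,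
          Cardinal.mk_Iio_ordinal, Cardinal.lift_lift, Cardinal.lift_lt, ← Cardinal.lt_ord]
        exact hx
      · exact fun i ↦ IH i.1 i.2 (i.2.trans hx)

/-- The defining set for `ϑ(α)`. -/
def Sset (α : Ordinal.{0}) : Set Ordinal.{0} :=
  {ζ | AddClosed ζ ∧ kMax α < ζ ∧ ∀ β < α, kMax β < ζ → theta β < ζ}

lemma theta_eq (α : Ordinal) : theta α = sInf (Sset α) := by
  unfold Sset theta
  rw [WellFounded.fix_eq]

lemma theta_good : ∀ α : Ordinal, α < epsOmega1 →
    ∀ ζ₀ < Omega1, ∃ ζ ∈ Sset α, ζ₀ < ζ ∧ ζ < Omega1 := by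
  intro α
  induction α using Ordinal.induction with
  | h α IH =>
    intro hα ζ₀ hζ₀
    have hth : ∀ β, β < α → theta β ∈ Sset β ∧ theta β < Omega1 := by
      intro β hβ
      obtain ⟨ζ, hζS, -, hζΩ⟩ := IH β hβ (hβ.trans hα) 0 Omega1_pos
      have hne : (Sset β).Nonempty := ⟨ζ, hζS⟩
      have hmem : theta β ∈ Sset β := by rw [theta_eq]; exact csInf_mem hne
      have hle : theta β ≤ ζ := by rw [theta_eq]; exact csInf_le (OrderBot.bddBelow _) hζS
      exact ⟨hmem, lt_of_le_of_lt hle hζΩ⟩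
    set g : Ordinal → Ordinal :=
      fun ζ => sSup ((fun b => theta b + 1) '' {b | b < α ∧ kMax b < ζ}) with hg
    have hgΩ : ∀ ζ, ζ < Omega1 → g ζ < Omega1 := by
      intro ζ hζ
      have hJc : ((fun b => theta b + 1) '' {b | b < α ∧ kMax b < ζ}).Countable := by
        apply Set.Countable.image
        apply Set.Countable.mono ?_ (Klt_countable hζ)
        rintro b ⟨hb1, hb2⟩
        exact ⟨hb1.trans hα, fun β hβ =>
          lt_of_le_of_lt (le_kMax (hb1.trans hα) hβ) hb2⟩
      rcases ((fun b => theta b + 1) '' {b | b < α ∧ kMax b < ζ}).eq_empty_or_nonempty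
        with he | hne
      · rw [hg]
        simp only [he, csSup_empty]
        exact lt_of_le_of_lt bot_le hζ
      · obtain ⟨f, hf⟩ := hJc.exists_eq_range hne
        have hfm : ∀ m, f m < Omega1 := by
          intro m
          have : f m ∈ (fun b => theta b + 1) '' {b | b < α ∧ kMax b < ζ} := by
            rw [hf]; exact Set.mem_range_self m
          obtain ⟨b, ⟨hb1, -⟩, hb3⟩ := this
          rw [← hb3]
          exact succ_lt_Omega1 (hth b hb1).2
        have : g ζ = ⨆ m, f m := by rw [hg]; simp only [hf]; rfl
        rw [this]
        exact (by rw [show Omega1 = Ordinal.omega 1 from Cardinal.ord_aleph 1] at hfm ⊢; exact Ordinal.iSup_lt_omega_one hfm)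
    have hgle : ∀ ζ b, b < α → kMax b < ζ → theta b + 1 ≤ g ζ := by
      intro ζ b h1 h2
      apply le_csSup
      · have hsub : {b | b < α ∧ kMax b < ζ} ⊆ Set.Iio α := fun b hb => hb.1
        haveI : Small.{0} ↥{b | b < α ∧ kMax b < ζ} := small_subset hsub
        exact Ordinal.bddAbove_of_small
      · exact ⟨b, ⟨h1, h2⟩, rfl⟩
    set x : ℕ → Ordinal := fun n =>
      Nat.rec (Ordinal.omega0 ^ (max ζ₀ (kMax α) + 1))
        (fun _ prev => Ordinal.omega0 ^ (max prev (g prev) + 1)) n with hxdef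
    have hx0 : x 0 = Ordinal.omega0 ^ (max ζ₀ (kMax α) + 1) := rfl
    have hxs : ∀ n, x (n + 1) = Ordinal.omega0 ^ (max (x n) (g (x n)) + 1) := fun n => rfl
    have hxΩ : ∀ n, x n < Omega1 := by
      intro n
      induction n with
      | zero =>
        rw [hx0]
        exact omega0_opow_lt_Omega1 _
          (succ_lt_Omega1 (max_lt hζ₀ (kMax_lt_Omega1 hα)))
      | succ n ih =>
        rw [hxs]
        exact omega0_opow_lt_Omega1 _ (succ_lt_Omega1 (max_lt ih (hgΩ _ ih)))
    have hlt1 : ∀ y : Ordinal, y < y + 1 := by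
      intro y
      rw [Ordinal.add_one_eq_succ]
      exact Order.lt_succ y
    have hlt : ∀ n (y : Ordinal), y ≤ max (x n) (g (x n)) → y < x (n + 1) := by
      intro n y hy
      calc y ≤ max (x n) (g (x n)) := hy
        _ < max (x n) (g (x n)) + 1 := hlt1 _
        _ ≤ Ordinal.omega0 ^ (max (x n) (g (x n)) + 1) :=
            Ordinal.right_le_opow _ Ordinal.one_lt_omega0
        _ = x (n + 1) := (hxs n).symm
    have hmono : ∀ n, x n < x (n + 1) := fun n => hlt n _ (le_max_left _ _)
    have hmono' : Monotone x := monotone_nat_of_le_succ fun n => (hmono n).le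
    have hxleζ : ∀ n, x n ≤ ⨆ m, x m := fun n => Ordinal.le_iSup x n
    have hζΩ : (⨆ m, x m) < Omega1 := by
      rw [show Omega1 = Ordinal.omega 1 from Cardinal.ord_aleph 1] at hxΩ ⊢; exact Ordinal.iSup_lt_omega_one hxΩ
    have hx0gt : ∀ y : Ordinal, y ≤ max ζ₀ (kMax α) → y < x 0 := by
      intro y hy
      calc y ≤ max ζ₀ (kMax α) := hy
        _ < max ζ₀ (kMax α) + 1 := hlt1 _
        _ ≤ Ordinal.omega0 ^ (max ζ₀ (kMax α) + 1) :=
            Ordinal.right_le_opow _ Ordinal.one_lt_omega0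
        _ = x 0 := hx0.symm
    have hlt_mem : ∀ y, y < (⨆ m, x m) → ∃ n, y < x n := fun y hy =>
      Ordinal.lt_iSup_iff.1 hy
    have hform : ∀ n, ∃ e : Ordinal, x n = Ordinal.omega0 ^ e := by
      intro n
      cases n with
      | zero => exact ⟨_, hx0⟩
      | succ n => exact ⟨_, hxs n⟩
    have hprin : AddClosed (⨆ m, x m) := by
      have hP : Ordinal.Principal (· + ·) (⨆ m, x m) := by
        intro a b ha hb
        obtain ⟨m, hm⟩ := hlt_mem a ha
        obtain ⟨n, hn⟩ := hlt_mem b hb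
        have hmN : a < x (max m n) := hm.trans_le (hmono' (le_max_left m n))
        have hnN : b < x (max m n) := hn.trans_le (hmono' (le_max_right m n))
        obtain ⟨e, he⟩ := hform (max m n)
        rw [he] at hmN hnN
        calc a + b < Ordinal.omega0 ^ e := Ordinal.principal_add_omega0_opow e hmN hnN
          _ = x (max m n) := he.symm
          _ ≤ _ := hxleζ _
      rcases Ordinal.principal_add_iff_zero_or_omega0_opow.1 hP with h0 | h
      · exfalso
        have hpos : (0 : Ordinal) < x 0 := by
          rw [hx0]
          exact Ordinal.opow_pos _ Ordinal.omega0_pos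
        have := hpos.trans_le (hxleζ 0)
        rw [h0] at this
        exact absurd this (lt_irrefl 0)
      · obtain ⟨a, ha⟩ := h
        exact ⟨a, ha.symm⟩
    refine ⟨⨆ m, x m, ⟨hprin, ?_, ?_⟩, ?_, hζΩ⟩
    · exact (hx0gt _ (le_max_right _ _)).trans_le (hxleζ 0)
    · intro b hb hkb
      obtain ⟨n, hn⟩ := hlt_mem _ hkb
      have h1 : theta b + 1 ≤ g (x n) := hgle _ b hb hn
      calc theta b < theta b + 1 := hlt1 _
        _ ≤ g (x n) := h1
        _ < x (n + 1) := hlt n _ (le_max_right _ _)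
        _ ≤ _ := hxleζ (n + 1)
    · exact (hx0gt _ (le_max_left _ _)).trans_le (hxleζ 0)

lemma theta_mem {α : Ordinal} (hα : α < epsOmega1) :
    theta α ∈ Sset α ∧ theta α < Omega1 := by
  obtain ⟨ζ, hζS, -, hζΩ⟩ := theta_good α hα 0 Omega1_pos
  have hne : (Sset α).Nonempty := ⟨ζ, hζS⟩
  have hmem : theta α ∈ Sset α := by rw [theta_eq]; exact csInf_mem hne
  have hle : theta α ≤ ζ := by rw [theta_eq]; exact csInf_le (OrderBot.bddBelow _) hζS
  exact ⟨hmem, lt_of_le_of_lt hle hζΩ⟩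

end Aux

/-- the basic comparison property of the `ϑ`-function. -/
theorem stmt7 (α β : Ordinal.{0}) (hα : α < epsOmega1) (hβ : β < epsOmega1) :
    theta α < theta β ↔
      ((α < β ∧ kMax α < theta β) ∨ (β < α ∧ theta α ≤ kMax β)) := by
  obtain ⟨⟨hA1, hA2, hA3⟩, -⟩ := theta_mem hα
  obtain ⟨⟨hB1, hB2, hB3⟩, -⟩ := theta_mem hβ
  constructor
  · intro h
    rcases lt_trichotomy α β with hab | rfl | hba
    · exact Or.inl ⟨hab, hA2.trans h⟩
    · exact absurd h (lt_irrefl _)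
    · refine Or.inr ⟨hba, ?_⟩
      by_contra hcon
      push_neg at hcon
      have hmem : theta α ∈ Sset β :=
        ⟨hA1, hcon, fun γ hγβ hkγ => hA3 γ (hγβ.trans hba) hkγ⟩
      have : theta β ≤ theta α := by
        rw [theta_eq]
        exact csInf_le (OrderBot.bddBelow _) hmem
      exact absurd h (not_lt.2 this)
  · rintro (⟨hab, hk⟩ | ⟨hba, hk⟩)
    · exact hB3 α hab hk
    · exact lt_of_le_of_lt hk hB2
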